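/- arXiv:1704.03580 — 3 statements merged into one kernel-verified Lean document; each statement's English description precedes it below -/
import Mathlib

section
/- If a finite group G embeds into GL_n(ℚ), then G embeds into GL_n(ℤ); consequently the minimal faithful rational representation dimension of a finite group equals its minimal faithful integral representation dimension. -/
open Matrix

theorem key {G : Type*} [Group G] [Finite G] (n : ℕ)
    (f : G →* GL (Fin n) ℚ) (hf : Function.Injective f) :
    ∃ f : G →* GL (Fin n) ℤ, Function.Injective f := by
  classical
  set V := Fin n → ℚ
  -- the invariant lattice
  set S : Set V := Set.range fun p : G × Fin n =>
    ((f p.1 : Matrix (Fin n) (Fin n) ℚ)).mulVec (Pi.single p.2 1) with hS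
  set M : Submodule ℤ V := Submodule.span ℤ S with hM
  have hSfin : S.Finite := Set.finite_range _
  haveI : Module.Finite ℤ M := Module.Finite.span_of_finite ℤ hSfin
  haveI : Module.Free ℤ M := Module.free_of_finite_type_torsion_free'
  -- ℤ-linear action
  set L : G → (V →ₗ[ℤ] V) := fun g =>
    ((f g : Matrix (Fin n) (Fin n) ℚ)).mulVecLin.restrictScalars ℤ with hL
  have hLapp : ∀ g (x : V), L g x = ((f g : Matrix (Fin n) (Fin n) ℚ)).mulVec x := fun _ _ => rfl
  have hLL : ∀ g h (x : V), L g (L h x) = L (g * h) x := by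
    intro g h x
    simp only [hLapp, mulVec_mulVec]
    rw [← Units.val_mul, ← _root_.map_mul]
  have hL1 : ∀ x : V, L 1 x = x := by
    intro x
    simp [hLapp, Units.val_one]
  have hinvle : ∀ g, M.map (L g) ≤ M := by
    intro g
    rw [hM, Submodule.map_span, Submodule.span_le]
    rintro - ⟨-, ⟨⟨h, i⟩, rfl⟩, rfl⟩
    refine Submodule.subset_span ?_
    exact ⟨⟨g * h, i⟩, by rw [hLapp, mulVec_mulVec, ← Units.val_mul, ← _root_.map_mul]⟩
  have hinv : ∀ g, M.map (L g) = M := by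
    intro g
    refine le_antisymm (hinvle g) ?_
    intro x hx
    refine ⟨L g⁻¹ x, hinvle g⁻¹ ⟨x, hx, rfl⟩, ?_⟩
    rw [hLL, mul_inv_cancel, hL1]
  -- M spans V over ℚ
  have hsingle : ∀ i : Fin n, (Pi.single i 1 : V) ∈ M := by
    intro i
    refine Submodule.subset_span ⟨⟨1, i⟩, ?_⟩
    show ((f 1 : Matrix (Fin n) (Fin n) ℚ)).mulVec (Pi.single i 1) = _
    rw [_root_.map_one, Units.val_one, one_mulVec]
  have hspan : Submodule.span ℚ (M : Set V) = ⊤ := by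
    rw [eq_top_iff, ← (Pi.basisFun ℚ (Fin n)).span_eq, Submodule.span_le]
    rintro - ⟨i, rfl⟩
    exact Submodule.subset_span (by simpa [Pi.basisFun_apply] using hsingle i)
  -- a ℤ-basis of M gives a ℚ-basis of V
  set ι := Module.Free.ChooseBasisIndex ℤ M with hι
  set b : Module.Basis ι ℤ M := Module.Free.chooseBasis ℤ M with hb
  set v : ι → V := fun i => (b i : V) with hv
  have hli : LinearIndependent ℚ v := by
    rw [← LinearIndependent.iff_fractionRing (R := ℤ) (K := ℚ)]
    exact b.linearIndependent.map' M.subtype M.ker_subtype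
  have hvspanZ : Submodule.span ℤ (Set.range v) = M := by
    have := congrArg (Submodule.map M.subtype) b.span_eq
    rwa [Submodule.map_span, Submodule.map_top, Submodule.range_subtype,
      ← Set.range_comp] at this
  have hvspan : Submodule.span ℚ (Set.range v) = ⊤ := by
    rw [eq_top_iff, ← hspan, Submodule.span_le]
    intro x hx
    have : x ∈ Submodule.span ℤ (Set.range v) := by rw [hvspanZ]; exact hx
    exact Submodule.span_subset_span ℤ ℚ _ this
  have bV : Module.Basis ι ℚ V := Module.Basis.mk hli (le_of_eq hvspan.symm)
  have hcard : Fintype.card ι = n := by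
    have h1 := Module.finrank_eq_card_basis bV
    rw [Module.finrank_fin_fun ℚ] at h1
    omega
  set e : ι ≃ Fin n := Fintype.equivFinOfCardEq hcard with he
  set b' : Module.Basis (Fin n) ℤ M := b.reindex e with hb'
  -- ℤ-linear automorphisms of V
  set E : G → (V ≃ₗ[ℤ] V) := fun g => LinearEquiv.ofLinear (L g) (L g⁻¹)
    (LinearMap.ext fun x => by simp only [LinearMap.comp_apply, LinearMap.id_apply,
      hLL, mul_inv_cancel, hL1])
    (LinearMap.ext fun x => by simp only [LinearMap.comp_apply, LinearMap.id_apply,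
      hLL, inv_mul_cancel, hL1]) with hE
  have hEapp : ∀ g (x : V), E g x = L g x := fun _ _ => rfl
  have hEmap : ∀ g, M.map (E g : V →ₗ[ℤ] V) = M := fun g => hinv g
  -- restriction to M, as a group hom
  set ρ : G →* (M ≃ₗ[ℤ] M) :=
    { toFun := fun g => (E g).ofSubmodules M M (hEmap g)
      map_one' := by
        refine LinearEquiv.toLinearMap_injective (LinearMap.ext fun x => Subtype.ext ?_)
        show ((E 1).ofSubmodules M M (hEmap 1) x : V) = (((1 : ↥M ≃ₗ[ℤ] ↥M) x : ↥M) : V)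
        rw [LinearEquiv.ofSubmodules_apply, hEapp, hL1]
        rfl
      map_mul' := by
        intro g h
        refine LinearEquiv.toLinearMap_injective (LinearMap.ext fun x => Subtype.ext ?_)
        show ((E (g * h)).ofSubmodules M M (hEmap _) x : V)
          = ((E g).ofSubmodules M M (hEmap g) (((E h).ofSubmodules M M (hEmap h)) x) : V)
        rw [LinearEquiv.ofSubmodules_apply, LinearEquiv.ofSubmodules_apply,
          LinearEquiv.ofSubmodules_apply, hEapp, hEapp, hEapp, hLL] } with hρ
  -- transport to GL (Fin n) ℤ via the basis b'
  set ψ : (M ≃ₗ[ℤ] M) →* GL (Fin n) ℤ :=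
    ((Units.mapEquiv (LinearMap.toMatrixAlgEquiv b').toMulEquiv).toMonoidHom).comp
      ((LinearMap.GeneralLinearGroup.generalLinearEquiv ℤ M).symm.toMonoidHom) with hψ
  refine ⟨ψ.comp ρ, ?_⟩
  have hψinj : Function.Injective ψ := by
    rw [hψ]
    exact (Units.mapEquiv _).injective.comp (MulEquiv.injective _)
  rw [injective_iff_map_eq_one]
  intro g hg
  have hρg : ρ g = 1 := by
    apply hψinj
    rw [_root_.map_one]
    exact hg
  -- so f g is the identity on M, which spans V over ℚ; hence f g = 1
  have hfix : ∀ x ∈ M, ((f g : Matrix (Fin n) (Fin n) ℚ)).mulVecLin x = x := by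
    intro x hx
    have := congrArg (fun (u : M ≃ₗ[ℤ] M) => (u ⟨x, hx⟩ : V)) hρg
    simpa [hρ, LinearEquiv.ofSubmodules_apply, hEapp, hLapp] using this
  have : ((f g : Matrix (Fin n) (Fin n) ℚ)).mulVecLin = LinearMap.id := by
    apply LinearMap.ext_on hspan
    intro x hx
    exact hfix x hx
  have hfg : f g = 1 := by
    apply Units.ext
    show ((f g : Matrix (Fin n) (Fin n) ℚ)) = 1
    ext i j
    have h3 : (f g : Matrix (Fin n) (Fin n) ℚ) *ᵥ Pi.single j 1 = Pi.single j 1 :=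
      hfix _ (hsingle j)
    have h4 := congrFun h3 i
    simp only [Matrix.mulVec_single, mul_one, MulOpposite.op_one, one_smul, Matrix.col_apply] at h4
    rw [h4, Matrix.one_apply, Pi.single_apply]
  exact hf (by rw [hfg, _root_.map_one])

theorem stmt1 {G : Type*} [Group G] [Finite G] :
    (∀ n : ℕ, (∃ f : G →* GL (Fin n) ℚ, Function.Injective f) →
      ∃ f : G →* GL (Fin n) ℤ, Function.Injective f) ∧
    sInf {n : ℕ | ∃ f : G →* GL (Fin n) ℚ, Function.Injective f} =
      sInf {n : ℕ | ∃ f : G →* GL (Fin n) ℤ, Function.Injective f} := by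
  have hQZ : ∀ n : ℕ, (∃ f : G →* GL (Fin n) ℚ, Function.Injective f) →
      ∃ f : G →* GL (Fin n) ℤ, Function.Injective f := by
    rintro n ⟨f, hf⟩
    exact key n f hf
  have hZQ : ∀ n : ℕ, (∃ f : G →* GL (Fin n) ℤ, Function.Injective f) →
      ∃ f : G →* GL (Fin n) ℚ, Function.Injective f := by
    rintro n ⟨f, hf⟩
    refine ⟨(Matrix.GeneralLinearGroup.map (n := Fin n) (Int.castRingHom ℚ)).comp f,
      fun a b hab => hf (Units.ext
        (Matrix.map_injective Int.cast_injective (congrArg Units.val hab)))⟩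
  refine ⟨hQZ, ?_⟩
  congr 1
  ext n
  exact ⟨hQZ n, hZQ n⟩
end

section
/- Any element of prime order p in GL_n(ℤ) satisfies p ≤ n + 1. -/
open Polynomial

theorem stmt5 {n : ℕ} {p : ℕ} (hp : p.Prime) (g : GL (Fin n) ℤ)
    (hg : orderOf g = p) (hg1 : g ≠ 1) : p ≤ n + 1 := by
  haveI : Fact p.Prime := ⟨hp⟩
  rcases Nat.eq_zero_or_pos n with hn | hn
  · subst hn
    exact absurd (Subsingleton.elim g 1) hg1
  -- the matrix over ℚ
  set M : Matrix (Fin n) (Fin n) ℚ := (Int.castRingHom ℚ).mapMatrix (g : Matrix (Fin n) (Fin n) ℤ) with hM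
  have hMp : M ^ p = 1 := by
    have : (g : Matrix (Fin n) (Fin n) ℤ) ^ p = 1 := by
      have h := congrArg Units.val (pow_orderOf_eq_one g)
      rw [hg] at h
      simpa [Units.val_pow_eq_pow_val] using h
    rw [hM, ← map_pow, this, map_one]
  have hM1 : M ≠ 1 := by
    intro h
    apply hg1
    ext i j
    have := congrFun (congrFun h i) j
    simp only [hM, RingHom.mapMatrix_apply, Matrix.map_apply, Matrix.one_apply, Units.val_one, Int.coe_castRingHom] at this ⊢
    split_ifs at this ⊢ with h' <;> exact_mod_cast this
  have hdvd : minpoly ℚ M ∣ X ^ p - 1 := by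
    apply minpoly.dvd
    simp [hMp]
  rw [← cyclotomic_prime_mul_X_sub_one ℚ p] at hdvd
  have hirr : Irreducible (cyclotomic p ℚ) := cyclotomic.irreducible_rat hp.pos
  have hcyc_dvd : cyclotomic p ℚ ∣ minpoly ℚ M := by
    by_contra h
    have hcop : IsCoprime (minpoly ℚ M) (cyclotomic p ℚ) :=
      (hirr.coprime_iff_not_dvd.mpr h).symm
    have hdvd' : minpoly ℚ M ∣ X - 1 := by
      rw [mul_comm] at hdvd
      exact hcop.dvd_of_dvd_mul_right hdvd
    haveI : Nonempty (Fin n) := ⟨⟨0, hn⟩⟩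
    have hker : IsIntegral ℚ M := Matrix.isIntegral M
    have hmonic := minpoly.monic hker
    have hdegpos := minpoly.natDegree_pos hker
    have hX1 : (X - 1 : ℚ[X]) = X - C 1 := by simp
    have heq : minpoly ℚ M = X - 1 := by
      refine (Polynomial.eq_of_monic_of_dvd_of_natDegree_le hmonic
        (by rw [hX1]; exact monic_X_sub_C 1) hdvd' ?_).symm
      rw [hX1, natDegree_X_sub_C]
      exact hdegpos
    have : M = 1 := by
      have := minpoly.aeval ℚ M
      rw [heq] at this
      simpa [sub_eq_zero] using this
    exact hM1 this
  have h1 : (cyclotomic p ℚ).natDegree ≤ (minpoly ℚ M).natDegree :=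
    natDegree_le_of_dvd hcyc_dvd (minpoly.ne_zero (Matrix.isIntegral M))
  have h2 : (minpoly ℚ M).natDegree ≤ M.charpoly.natDegree :=
    natDegree_le_of_dvd (Matrix.minpoly_dvd_charpoly M) (Matrix.charpoly_monic M).ne_zero
  rw [natDegree_cyclotomic, Nat.totient_prime hp] at h1
  rw [Matrix.charpoly_natDegree_eq_dim, Fintype.card_fin] at h2
  omega
end

section
/- For n ≥ 3, the special linear group SL_n(ℤ) is normally generated by the alternating group A_{n+1}, where A_{n+1} is embedded in SL_n(ℤ) as the image of even permutation matrices acting on the standard (n+1)-dimensional permutation representation restricted to the sum-zero sublattice. -/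
/-- The matrix of the even permutation `σ` of `Fin (n+1)` acting on the sum-zero
sublattice of `ℤ^{n+1}`, in the basis `e_j - e_{last}`, `j < n`. -/
def stdRepMatrix (n : ℕ) (σ : Equiv.Perm (Fin (n + 1))) : Matrix (Fin n) (Fin n) ℤ :=
  Matrix.of fun i j =>
    (if σ j.castSucc = i.castSucc then 1 else 0) -
      (if σ (Fin.last n) = i.castSucc then 1 else 0)

open Matrix Equiv

namespace Stmt16Aux


variable {n : ℕ}

/-- Transvection as an element of `SL_n(ℤ)`. -/
def tsl {i j : Fin n} (h : i ≠ j) (c : ℤ) : Matrix.SpecialLinearGroup (Fin n) ℤ :=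
  ⟨Matrix.transvection i j c, Matrix.det_transvection_of_ne i j h c⟩

lemma tsl_mul {i j : Fin n} (h : i ≠ j) (c d : ℤ) : tsl h c * tsl h d = tsl h (c + d) :=
  Subtype.ext (Matrix.transvection_mul_transvection_same i j h c d)

lemma tsl_zero {i j : Fin n} (h : i ≠ j) : tsl h 0 = 1 :=
  Subtype.ext (Matrix.transvection_zero i j)

lemma tsl_inv {i j : Fin n} (h : i ≠ j) (c : ℤ) : (tsl h c)⁻¹ = tsl h (-c) := by
  apply inv_eq_of_mul_eq_one_right
  rw [tsl_mul, add_neg_cancel, tsl_zero]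

lemma rowop_entry {i j : Fin n} (h : i ≠ j) (c : ℤ) (A : Matrix.SpecialLinearGroup (Fin n) ℤ)
    (a b : Fin n) :
    ((tsl h c * A : Matrix.SpecialLinearGroup (Fin n) ℤ) : Matrix (Fin n) (Fin n) ℤ) a b =
      if a = i then (A : Matrix (Fin n) (Fin n) ℤ) a b + c * (A : Matrix (Fin n) (Fin n) ℤ) j b
      else (A : Matrix (Fin n) (Fin n) ℤ) a b := by
  rw [Matrix.SpecialLinearGroup.coe_mul]
  by_cases ha : a = i
  · subst ha; simp [tsl]
  · simp [tsl, ha]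

lemma colop_entry {i j : Fin n} (h : i ≠ j) (c : ℤ) (A : Matrix.SpecialLinearGroup (Fin n) ℤ)
    (a b : Fin n) :
    ((A * tsl h c : Matrix.SpecialLinearGroup (Fin n) ℤ) : Matrix (Fin n) (Fin n) ℤ) a b =
      if b = j then (A : Matrix (Fin n) (Fin n) ℤ) a b + c * (A : Matrix (Fin n) (Fin n) ℤ) a i
      else (A : Matrix (Fin n) (Fin n) ℤ) a b := by
  rw [Matrix.SpecialLinearGroup.coe_mul]
  by_cases hb : b = j
  · subst hb; simp [tsl]
  · simp [tsl, hb]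



variable {n : ℕ}

local notation "SLn" => Matrix.SpecialLinearGroup (Fin n) ℤ

/-- Invariant: the matrix agrees with the identity on the first `k` rows and columns. -/
def Pk (k : ℕ) (A : SLn) : Prop :=
  ∀ i j : Fin n, ((i : ℕ) < k ∨ (j : ℕ) < k) →
    (A : Matrix (Fin n) (Fin n) ℤ) i j = if i = j then 1 else 0

lemma Pk_rowop {k : ℕ} {A : SLn} (hA : Pk k A) {r1 r2 : Fin n} (h : r1 ≠ r2)
    (h1 : k ≤ (r1 : ℕ)) (h2 : k ≤ (r2 : ℕ)) (c : ℤ) : Pk k (tsl h c * A) := by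
  intro a b hab
  rw [rowop_entry]
  by_cases ha : a = r1
  · subst ha
    have hb : (b : ℕ) < k := by
      rcases hab with h' | h'
      · omega
      · exact h'
    have hab' : a ≠ b := by intro e; subst e; omega
    have e1 := hA a b (Or.inr hb)
    have e2 := hA r2 b (Or.inr hb)
    have hr2b : r2 ≠ b := by intro e; subst e; omega
    rw [if_pos rfl, e1, e2, if_neg hab', if_neg hr2b]
    ring
  · rw [if_neg ha]
    exact hA a b hab

theorem subgroup_eq_top (H : Subgroup SLn)
    (hH : ∀ (i j : Fin n) (h : i ≠ j) (c : ℤ), tsl h c ∈ H) : H = ⊤ := by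
  rw [Subgroup.eq_top_iff']
  suffices main : ∀ (d k : ℕ), n ≤ k + d → ∀ A : SLn, Pk k A → A ∈ H by
    intro A
    exact main n 0 (by omega) A (fun i j hij => by omega)
  intro d
  induction d with
  | zero =>
    intro k hk A hA
    have hA1 : A = 1 := by
      apply Subtype.ext
      ext a b
      have := hA a b (Or.inl (by omega))
      simpa [Matrix.one_apply] using this
    rw [hA1]; exact one_mem H
  | succ d ih =>
    intro k hk A₀ hA₀
    by_cases hk2 : n ≤ k + d
    · exact ih k hk2 A₀ hA₀
    have hkn : k < n := by omega
    set k' : Fin n := ⟨k, hkn⟩ with hk'def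
    have hkv : (k' : ℕ) = k := rfl
    have hknext : ∀ B : SLn, Pk (k + 1) B → B ∈ H := fun B hB => ih (k + 1) (by omega) B hB
    -- once column k is `e_k` and row k is cleared, we can pass to k+1
    have finish : ∀ A : SLn, Pk k A →
        (∀ i, (A : Matrix (Fin n) (Fin n) ℤ) i k' = if i = k' then 1 else 0) →
        (∀ j, j ≠ k' → (A : Matrix (Fin n) (Fin n) ℤ) k' j = 0) → A ∈ H := by
      intro A hA hcol hrow
      apply hknext
      intro a b hab
      by_cases ha : (a : ℕ) < k
      · exact hA a b (Or.inl ha)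
      by_cases hb : (b : ℕ) < k
      · exact hA a b (Or.inr hb)
      -- a = k' or b = k'
      rcases hab with h | h
      · have haK : a = k' := Fin.ext (by omega)
        subst haK
        by_cases hbk : b = k'
        · subst hbk; simp [hcol]
        · have hne : k' ≠ b := fun e => hbk e.symm
          rw [hrow b hbk, if_neg hne]
      · have hbK : b = k' := Fin.ext (by omega)
        subst hbK
        exact hcol a
    -- clearing out the row k (to the right of the diagonal)
    have rowclear : ∀ (m : ℕ) (A : SLn), Pk k A →
        (∀ i, (A : Matrix (Fin n) (Fin n) ℤ) i k' = if i = k' then 1 else 0) →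
        (∑ j : Fin n, if j = k' then 0 else ((A : Matrix (Fin n) (Fin n) ℤ) k' j).natAbs) ≤ m →
        A ∈ H := by
      intro m
      induction m with
      | zero =>
        intro A hA hcol hsum
        refine finish A hA hcol fun j hj => ?_
        have hterm : (if j = k' then 0 else ((A : Matrix (Fin n) (Fin n) ℤ) k' j).natAbs) = 0 := by
          have hnn : ∀ x ∈ Finset.univ, 0 ≤ (if x = k' then 0 else ((A : Matrix (Fin n) (Fin n) ℤ) k' x).natAbs) := fun x _ => Nat.zero_le _
          have := Nat.le_zero.mp hsum
          exact Finset.sum_eq_zero_iff_of_nonneg hnn |>.mp this j (Finset.mem_univ j)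
        rw [if_neg hj] at hterm
        exact Int.natAbs_eq_zero.mp hterm
      | succ m ihm =>
        intro A hA hcol hsum
        by_cases hex : ∃ j, j ≠ k' ∧ (A : Matrix (Fin n) (Fin n) ℤ) k' j ≠ 0
        · obtain ⟨j, hjk, hj0⟩ := hex
          have hkj : k' ≠ j := Ne.symm hjk
          set c : ℤ := (A : Matrix (Fin n) (Fin n) ℤ) k' j with hc
          set A' : SLn := A * tsl hkj (-c) with hA'def
          have hentry : ∀ a b, (A' : Matrix (Fin n) (Fin n) ℤ) a b =
              if b = j then (A : Matrix (Fin n) (Fin n) ℤ) a b + (-c) * (A : Matrix (Fin n) (Fin n) ℤ) a k'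
              else (A : Matrix (Fin n) (Fin n) ℤ) a b := colop_entry hkj (-c) A
          have hjge : k ≤ (j : ℕ) := by
            by_contra hlt
            push_neg at hlt
            have := hA k' j (Or.inr hlt)
            rw [if_neg hkj] at this
            exact hj0 this
          have hA'P : Pk k A' := by
            intro a b hab
            rw [hentry]
            by_cases hbj : b = j
            · subst hbj
              rcases hab with h | h
              · have hanb : a ≠ b := by intro e; subst e; omega
                have hank : a ≠ k' := by intro e; subst e; omega
                rw [if_pos rfl, hA a b (Or.inl h), hA a k' (Or.inl h), if_neg hanb, if_neg hank]
                ring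
              · omega
            · rw [if_neg hbj]
              exact hA a b hab
          have hcol' : ∀ i, (A' : Matrix (Fin n) (Fin n) ℤ) i k' = if i = k' then 1 else 0 := by
            intro i
            rw [hentry, if_neg hkj]
            exact hcol i
          have hAj0 : (A' : Matrix (Fin n) (Fin n) ℤ) k' j = 0 := by
            rw [hentry, if_pos rfl, hcol k', if_pos rfl]
            ring
          have hsum' :
              (∑ jj : Fin n, if jj = k' then 0 else ((A' : Matrix (Fin n) (Fin n) ℤ) k' jj).natAbs) ≤ m := by
            have h1 := Finset.add_sum_erase Finset.univ
              (fun jj => if jj = k' then 0 else ((A' : Matrix (Fin n) (Fin n) ℤ) k' jj).natAbs)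
              (Finset.mem_univ j)
            have h2 := Finset.add_sum_erase Finset.univ
              (fun jj => if jj = k' then 0 else ((A : Matrix (Fin n) (Fin n) ℤ) k' jj).natAbs)
              (Finset.mem_univ j)
            have heq : (∑ x ∈ Finset.univ.erase j, if x = k' then 0 else ((A' : Matrix (Fin n) (Fin n) ℤ) k' x).natAbs)
                = ∑ x ∈ Finset.univ.erase j, if x = k' then 0 else ((A : Matrix (Fin n) (Fin n) ℤ) k' x).natAbs := by
              refine Finset.sum_congr rfl fun x hx => ?_
              have hxj : x ≠ j := (Finset.mem_erase.mp hx).1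
              rw [hentry, if_neg hxj]
            have hcpos : 1 ≤ c.natAbs := Int.natAbs_pos.mpr hj0
            simp only [if_neg hjk, hAj0, Int.natAbs_zero] at h1 h2
            omega
          have hback : A = A' * tsl hkj c := by
            rw [hA'def, mul_assoc, tsl_mul, neg_add_cancel, tsl_zero, mul_one]
          rw [hback]
          exact H.mul_mem (ihm A' hA'P hcol' hsum') (hH _ _ hkj c)
        · push_neg at hex
          exact finish A hA hcol hex
    -- key fact from the inverse matrix
    have hinv : ∀ A : SLn, ∑ l : Fin n,
        ((A⁻¹ : SLn) : Matrix (Fin n) (Fin n) ℤ) k' l * (A : Matrix (Fin n) (Fin n) ℤ) l k' = 1 := by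
      intro A
      have h1 : ((A⁻¹ : SLn) : Matrix (Fin n) (Fin n) ℤ) * (A : Matrix (Fin n) (Fin n) ℤ) = 1 := by
        rw [← Matrix.SpecialLinearGroup.coe_mul, inv_mul_cancel, Matrix.SpecialLinearGroup.coe_one]
      have h2 := congrFun (congrFun h1 k') k'
      simpa [Matrix.mul_apply, Matrix.one_apply] using h2
    have euclid : ∀ (m : ℕ) (A : SLn), Pk k A →
        (∑ l : Fin n, ((A : Matrix (Fin n) (Fin n) ℤ) l k').natAbs) ≤ m → A ∈ H := by
      intro m
      induction m with
      | zero =>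
        intro A hA hsum
        exfalso
        have hz : ∀ l : Fin n, (A : Matrix (Fin n) (Fin n) ℤ) l k' = 0 := by
          intro l
          have hterm : ((A : Matrix (Fin n) (Fin n) ℤ) l k').natAbs = 0 := by
            have hnn : ∀ x ∈ Finset.univ, 0 ≤ ((A : Matrix (Fin n) (Fin n) ℤ) x k').natAbs :=
              fun x _ => Nat.zero_le _
            exact Finset.sum_eq_zero_iff_of_nonneg hnn |>.mp (Nat.le_zero.mp hsum) l
              (Finset.mem_univ l)
          exact Int.natAbs_eq_zero.mp hterm
        have h1 := hinv A
        rw [Finset.sum_eq_zero (fun l _ => by rw [hz l, mul_zero])] at h1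
        exact absurd h1 (by norm_num)
      | succ m ihm =>
        intro A hA hsum
        set T : Finset (Fin n) :=
          Finset.univ.filter (fun i => (A : Matrix (Fin n) (Fin n) ℤ) i k' ≠ 0) with hT
        have hTge : ∀ i ∈ T, k ≤ (i : ℕ) := by
          intro i hi
          by_contra hlt
          push_neg at hlt
          have h1 := hA i k' (Or.inl hlt)
          have hik : i ≠ k' := fun e => by rw [e] at hlt; omega
          rw [if_neg hik] at h1
          exact (Finset.mem_filter.mp hi).2 h1
        have hTne : T.Nonempty := by
          by_contra hne
          rw [Finset.not_nonempty_iff_eq_empty] at hne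
          have hz : ∀ l, (A : Matrix (Fin n) (Fin n) ℤ) l k' = 0 := by
            intro l
            by_contra h0
            have hl : l ∈ T := Finset.mem_filter.mpr ⟨Finset.mem_univ l, h0⟩
            rw [hne] at hl
            exact absurd hl (Finset.notMem_empty l)
          have h1 := hinv A
          rw [Finset.sum_eq_zero (fun l _ => by rw [hz l, mul_zero])] at h1
          exact absurd h1 (by norm_num)
        obtain ⟨j, hjT, hjmin⟩ :=
          T.exists_min_image (fun i => ((A : Matrix (Fin n) (Fin n) ℤ) i k').natAbs) hTne
        have hj0 : (A : Matrix (Fin n) (Fin n) ℤ) j k' ≠ 0 := (Finset.mem_filter.mp hjT).2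
        have hjge : k ≤ (j : ℕ) := hTge j hjT
        by_cases hsing : ∀ i ∈ T, i = j
        · -- exactly one nonzero entry in the relevant part of column k
          have hzero : ∀ l, l ≠ j → (A : Matrix (Fin n) (Fin n) ℤ) l k' = 0 := by
            intro l hl
            by_contra h0
            exact hl (hsing l (Finset.mem_filter.mpr ⟨Finset.mem_univ l, h0⟩))
          set dd : ℤ := (A : Matrix (Fin n) (Fin n) ℤ) j k' with hdd
          have hdunit : dd = 1 ∨ dd = -1 := by
            have h1 := hinv A
            rw [Finset.sum_eq_single j (fun l _ hl => by rw [hzero l hl, mul_zero])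
              (fun h => absurd (Finset.mem_univ j) h)] at h1
            have hu : IsUnit dd := IsUnit.of_mul_eq_one _ (by rw [mul_comm]; exact h1)
            exact Int.isUnit_iff.mp hu
          have hdd2 : dd * dd = 1 := by rcases hdunit with h | h <;> rw [h] <;> norm_num
          by_cases hjk' : j = k'
          · have hAkkdd : (A : Matrix (Fin n) (Fin n) ℤ) k' k' = dd := by rw [hdd, hjk']
            rcases hdunit with hd1 | hdm1
            · -- d = 1 : the column is already e_k
              refine rowclear _ A hA (fun i => ?_) le_rfl
              by_cases hik : i = k'
              · rw [if_pos hik, hik, hAkkdd, hd1]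
              · rw [if_neg hik]
                exact hzero i (fun e => hik (e.trans hjk'))
            · -- d = -1
              by_cases hklt : k + 1 < n
              · -- fix the sign using the next row
                set j' : Fin n := ⟨k + 1, hklt⟩ with hj'def
                have hj'v : (j' : ℕ) = k + 1 := rfl
                have hj'k : j' ≠ k' := fun e => by
                  have : (k + 1 : ℕ) = k := congrArg Fin.val e
                  omega
                have hkj2 : k' ≠ j' := Ne.symm hj'k
                have hAj'0 : (A : Matrix (Fin n) (Fin n) ℤ) j' k' = 0 :=
                  hzero j' (fun e => hj'k (e.trans hjk'))
                have hAkk : (A : Matrix (Fin n) (Fin n) ℤ) k' k' = -1 := by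
                  rw [hAkkdd, hdm1]
                set A1 : SLn := tsl hj'k (-1) * A with hA1def
                have hA1P : Pk k A1 := Pk_rowop hA hj'k (by omega) (by omega) (-1)
                have h1e := rowop_entry hj'k (-1) A
                set A2 : SLn := tsl hkj2 2 * A1 with hA2def
                have hA2P : Pk k A2 := Pk_rowop hA1P hkj2 (by omega) (by omega) 2
                have h2e := rowop_entry hkj2 2 A1
                set A3 : SLn := tsl hj'k (-1) * A2 with hA3def
                have hA3P : Pk k A3 := Pk_rowop hA2P hj'k (by omega) (by omega) (-1)
                have h3e := rowop_entry hj'k (-1) A2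
                have hcol1 : ∀ i, (A1 : Matrix (Fin n) (Fin n) ℤ) i k' =
                    if i = j' then 1 else if i = k' then -1 else 0 := by
                  intro i
                  rw [h1e]
                  by_cases hi : i = j'
                  · rw [if_pos hi, if_pos hi, hi, hAj'0, hAkk]; norm_num
                  · rw [if_neg hi, if_neg hi]
                    by_cases hik : i = k'
                    · rw [if_pos hik, hik, hAkk]
                    · rw [if_neg hik]
                      exact hzero i (fun e => hik (e.trans hjk'))
                have hcol2 : ∀ i, (A2 : Matrix (Fin n) (Fin n) ℤ) i k' =
                    if i = j' then 1 else if i = k' then 1 else 0 := by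
                  intro i
                  rw [h2e]
                  by_cases hik : i = k'
                  · rw [if_pos hik, hik, hcol1, hcol1]
                    simp [hkj2, hj'k]
                  · rw [if_neg hik, hcol1]
                    simp [hik]
                have hcol3 : ∀ i, (A3 : Matrix (Fin n) (Fin n) ℤ) i k' =
                    if i = k' then 1 else 0 := by
                  intro i
                  rw [h3e]
                  by_cases hij' : i = j'
                  · rw [if_pos hij', hij', hcol2, hcol2]
                    simp [hj'k, hkj2]
                  · rw [if_neg hij', hcol2]
                    simp [hij']
                have hback : A = (tsl hj'k (-1))⁻¹ * ((tsl hkj2 2)⁻¹ * ((tsl hj'k (-1))⁻¹ * A3)) := by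
                  rw [hA3def, hA2def, hA1def]
                  group
                rw [hback]
                exact H.mul_mem (H.inv_mem (hH _ _ hj'k (-1)))
                  (H.mul_mem (H.inv_mem (hH _ _ hkj2 2))
                    (H.mul_mem (H.inv_mem (hH _ _ hj'k (-1)))
                      (rowclear _ A3 hA3P hcol3 le_rfl)))
              · -- k is the last index : determinant contradiction
                exfalso
                have hAkk : (A : Matrix (Fin n) (Fin n) ℤ) k' k' = -1 := by
                  rw [hAkkdd, hdm1]
                have hAdiag : (A : Matrix (Fin n) (Fin n) ℤ) =
                    Matrix.diagonal (fun i => if i = k' then (-1 : ℤ) else 1) := by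
                  ext x y
                  by_cases hxy : x = y
                  · subst hxy
                    by_cases hxk : x = k'
                    · rw [Matrix.diagonal_apply_eq, if_pos hxk, hxk, hAkk]
                    · have hxlt : (x : ℕ) < k := by
                        have := x.isLt
                        have : (x : ℕ) ≠ k := fun e => hxk (Fin.ext (e.trans hkv.symm))
                        omega
                      rw [Matrix.diagonal_apply_eq, if_neg hxk]
                      have h1 := hA x x (Or.inl hxlt)
                      rwa [if_pos rfl] at h1
                  · rw [Matrix.diagonal_apply_ne _ hxy]
                    by_cases hxk : (x : ℕ) < k
                    · have h1 := hA x y (Or.inl hxk)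
                      rwa [if_neg hxy] at h1
                    · by_cases hyk : (y : ℕ) < k
                      · have h1 := hA x y (Or.inr hyk)
                        rwa [if_neg hxy] at h1
                      · exfalso
                        have hx := x.isLt
                        have hy := y.isLt
                        exact hxy (Fin.ext (by omega))
                have hdet := A.2
                rw [hAdiag, Matrix.det_diagonal,
                  Finset.prod_eq_single k' (fun l _ hl => by rw [if_neg hl])
                    (fun h => absurd (Finset.mem_univ k') h), if_pos rfl] at hdet
                norm_num at hdet
          · -- single entry not on the diagonal : move it there
            have hkj' : k' ≠ j := fun e => hjk' e.symm
            have hAkk : (A : Matrix (Fin n) (Fin n) ℤ) k' k' = 0 := hzero k' hkj'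
            set A1 : SLn := tsl hkj' dd * A with hA1def
            have hA1P : Pk k A1 := Pk_rowop hA hkj' (by omega) hjge dd
            have h1e := rowop_entry hkj' dd A
            set A2 : SLn := tsl hjk' (-dd) * A1 with hA2def
            have hA2P : Pk k A2 := Pk_rowop hA1P hjk' hjge (by omega) (-dd)
            have h2e := rowop_entry hjk' (-dd) A1
            have hcol1 : ∀ i, (A1 : Matrix (Fin n) (Fin n) ℤ) i k' =
                if i = k' then 1 else if i = j then dd else 0 := by
              intro i
              rw [h1e]
              by_cases hik : i = k'
              · rw [if_pos hik, if_pos hik, hik, hAkk, ← hdd, hdd2]; norm_num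
              · rw [if_neg hik, if_neg hik]
                by_cases hij : i = j
                · rw [if_pos hij, hij, ← hdd]
                · rw [if_neg hij]
                  exact hzero i hij
            have hcol2 : ∀ i, (A2 : Matrix (Fin n) (Fin n) ℤ) i k' =
                if i = k' then 1 else 0 := by
              intro i
              rw [h2e]
              by_cases hij : i = j
              · rw [if_pos hij, hij, hcol1, hcol1]
                simp [hjk', hkj']
              · rw [if_neg hij, hcol1]
                simp [hij]
            have hback : A = (tsl hkj' dd)⁻¹ * ((tsl hjk' (-dd))⁻¹ * A2) := by
              rw [hA2def, hA1def]
              group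
            rw [hback]
            exact H.mul_mem (H.inv_mem (hH _ _ hkj' dd))
              (H.mul_mem (H.inv_mem (hH _ _ hjk' (-dd)))
                (rowclear _ A2 hA2P hcol2 le_rfl))
        · -- two nonzero entries : Euclid step
          push_neg at hsing
          obtain ⟨i, hiT, hij⟩ := hsing
          have hi0 : (A : Matrix (Fin n) (Fin n) ℤ) i k' ≠ 0 := (Finset.mem_filter.mp hiT).2
          have hige : k ≤ (i : ℕ) := hTge i hiT
          set q : ℤ := (A : Matrix (Fin n) (Fin n) ℤ) i k' / (A : Matrix (Fin n) (Fin n) ℤ) j k'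
            with hq
          set A' : SLn := tsl hij (-q) * A with hA'def
          have hP' : Pk k A' := Pk_rowop hA hij hige hjge (-q)
          have hent := rowop_entry hij (-q) A
          have hAik : (A' : Matrix (Fin n) (Fin n) ℤ) i k' =
              (A : Matrix (Fin n) (Fin n) ℤ) i k' % (A : Matrix (Fin n) (Fin n) ℤ) j k' := by
            rw [hent, if_pos rfl, hq, Int.emod_def]
            ring
          have hlt : ((A' : Matrix (Fin n) (Fin n) ℤ) i k').natAbs <
              ((A : Matrix (Fin n) (Fin n) ℤ) i k').natAbs := by
            rw [hAik]
            have h1 : 0 ≤ (A : Matrix (Fin n) (Fin n) ℤ) i k' % (A : Matrix (Fin n) (Fin n) ℤ) j k' :=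
              Int.emod_nonneg _ hj0
            have h2 : (A : Matrix (Fin n) (Fin n) ℤ) i k' % (A : Matrix (Fin n) (Fin n) ℤ) j k' <
                |(A : Matrix (Fin n) (Fin n) ℤ) j k'| := Int.emod_lt_abs _ hj0
            have h3 := hjmin i hiT
            rw [Int.abs_eq_natAbs] at h2
            omega
          have hsum' : (∑ l : Fin n, ((A' : Matrix (Fin n) (Fin n) ℤ) l k').natAbs) ≤ m := by
            have h1 := Finset.add_sum_erase Finset.univ
              (fun l => ((A' : Matrix (Fin n) (Fin n) ℤ) l k').natAbs) (Finset.mem_univ i)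
            have h2 := Finset.add_sum_erase Finset.univ
              (fun l => ((A : Matrix (Fin n) (Fin n) ℤ) l k').natAbs) (Finset.mem_univ i)
            have heq : (∑ x ∈ Finset.univ.erase i, ((A' : Matrix (Fin n) (Fin n) ℤ) x k').natAbs)
                = ∑ x ∈ Finset.univ.erase i, ((A : Matrix (Fin n) (Fin n) ℤ) x k').natAbs := by
              refine Finset.sum_congr rfl fun x hx => ?_
              have hxi : x ≠ i := (Finset.mem_erase.mp hx).1
              rw [hent, if_neg hxi]
            omega
          have hback : A = tsl hij q * A' := by
            rw [hA'def, ← mul_assoc, tsl_mul, add_neg_cancel, tsl_zero, one_mul]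
          rw [hback]
          exact H.mul_mem (hH _ _ hij q) (ihm A' hP' hsum')
    exact euclid _ A₀ hA₀ le_rfl


/-- extension of a permutation of `Fin n` to `Fin (n+1)` fixing the last element -/
def ext1 {n : ℕ} (π : Equiv.Perm (Fin n)) : Equiv.Perm (Fin (n + 1)) :=
  (Equiv.permCongr finSuccEquivLast).symm π.optionCongr

lemma ext1_castSucc {n : ℕ} (π : Equiv.Perm (Fin n)) (i : Fin n) :
    ext1 π i.castSucc = (π i).castSucc := by
  simp [ext1, Equiv.permCongr_apply, finSuccEquivLast_castSucc]

lemma ext1_last {n : ℕ} (π : Equiv.Perm (Fin n)) : ext1 π (Fin.last n) = Fin.last n := by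
  simp [ext1, Equiv.permCongr_apply, finSuccEquivLast_last]

lemma sign_ext1 {n : ℕ} (π : Equiv.Perm (Fin n)) :
    Equiv.Perm.sign (ext1 π) = Equiv.Perm.sign π := by
  rw [ext1, Equiv.permCongr_symm, Equiv.Perm.sign_permCongr, Equiv.optionCongr_sign]

/-- permutation matrix as an element of SL -/
def permSL {n : ℕ} (π : Equiv.Perm (Fin n)) (hπ : Equiv.Perm.sign π = 1) :
    Matrix.SpecialLinearGroup (Fin n) ℤ :=
  ⟨(π⁻¹).permMatrix ℤ, by rw [Matrix.det_permutation, Equiv.Perm.sign_inv, hπ]; rfl⟩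

lemma permMatrix_apply {n : ℕ} (π : Equiv.Perm (Fin n)) (x y : Fin n) :
    (π.permMatrix ℤ) x y = if π x = y then 1 else 0 := by
  simp [Equiv.toPEquiv_apply, eq_comm]

lemma stdRep_ext1 {n : ℕ} (π : Equiv.Perm (Fin n)) :
    (Matrix.of fun i j : Fin n =>
      ((if (ext1 π) j.castSucc = i.castSucc then (1 : ℤ) else 0) -
        (if (ext1 π) (Fin.last n) = i.castSucc then 1 else 0))) = (π⁻¹).permMatrix ℤ := by
  ext i j
  have h2 : ((π j).castSucc = i.castSucc) = (π⁻¹ i = j) := by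
    apply propext
    constructor
    · intro h
      have h3 := Fin.castSucc_injective n h
      rw [← h3]; simp
    · intro h
      rw [← h]; simp
  rw [Matrix.of_apply, ext1_last, ext1_castSucc, permMatrix_apply,
    if_neg (show ¬Fin.last n = i.castSucc from (Fin.castSucc_lt_last i).ne')]
  by_cases hc : (π j).castSucc = i.castSucc
  · rw [if_pos hc, if_pos (show π⁻¹ i = j from by
      rw [← Fin.castSucc_injective n hc]; simp)]
    norm_num
  · rw [if_neg hc, if_neg (show ¬π⁻¹ i = j from fun h => hc (by rw [← h]; simp))]
    norm_num

lemma toPEquiv_eq_some_iff {n : ℕ} (π : Equiv.Perm (Fin n)) (x y : Fin n) :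
    (Equiv.toPEquiv π) x = some y ↔ π x = y := by
  rw [Equiv.toPEquiv_apply, Option.some_inj]

lemma permSL_mul_tsl {n : ℕ} (π : Equiv.Perm (Fin n)) (hπ : Equiv.Perm.sign π = 1)
    {a b : Fin n} (hab : a ≠ b) (c : ℤ) :
    permSL π hπ * tsl hab c =
      tsl (show π a ≠ π b from fun e => hab (π.injective e)) c * permSL π hπ := by
  apply Subtype.ext
  rw [Matrix.SpecialLinearGroup.coe_mul, Matrix.SpecialLinearGroup.coe_mul]
  show (π⁻¹).permMatrix ℤ * Matrix.transvection a b c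
      = Matrix.transvection (π a) (π b) c * (π⁻¹).permMatrix ℤ
  ext x y
  by_cases hy : y = b
  · subst hy
    rw [Matrix.mul_transvection_apply_same]
    by_cases hx : x = π a
    · subst hx
      rw [Matrix.transvection_mul_apply_same]
      simp [toPEquiv_eq_some_iff]
    · rw [Matrix.transvection_mul_apply_of_ne _ _ _ _ hx]
      have h1 : π.symm x ≠ a := fun h => hx (by rw [← h]; simp)
      simp [toPEquiv_eq_some_iff, h1]
  · rw [Matrix.mul_transvection_apply_of_ne _ _ _ _ hy]
    by_cases hx : x = π a
    · subst hx
      rw [Matrix.transvection_mul_apply_same]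
      have h1 : b ≠ y := fun h => hy h.symm
      simp [toPEquiv_eq_some_iff, h1]
    · rw [Matrix.transvection_mul_apply_of_ne _ _ _ _ hx]

/-- the key commutator identity -/
lemma transvection_comm {n : ℕ} {i j k : Fin n} (hij : i ≠ j) (hjk : j ≠ k) (hik : i ≠ k) :
    Matrix.transvection j k (1 : ℤ) * Matrix.transvection i j 1 *
      Matrix.transvection j k (-1) * Matrix.transvection i j (-1) =
      Matrix.transvection i k (-1) := by
  have hFE : Matrix.single j k (1 : ℤ) * Matrix.single i j 1 = 0 := by
    apply Matrix.single_mul_single_of_ne; exact Ne.symm hik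
  have hEF : Matrix.single i j (1 : ℤ) * Matrix.single j k 1 =
      Matrix.single i k 1 := by
    rw [Matrix.single_mul_single_same]; norm_num
  have hEE : Matrix.single i j (1 : ℤ) * Matrix.single i j 1 = 0 := by
    apply Matrix.single_mul_single_of_ne; exact Ne.symm hij
  have hFF : Matrix.single j k (1 : ℤ) * Matrix.single j k 1 = 0 := by
    apply Matrix.single_mul_single_of_ne; exact Ne.symm hjk
  have hneg : ∀ (a b : Fin n), Matrix.single a b (-1 : ℤ) = -Matrix.single a b 1 := by
    intro a b
    ext u v
    by_cases h : a = u ∧ b = v <;> simp [Matrix.single, h]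
  simp only [Matrix.transvection, hneg]
  set E := Matrix.single i j (1 : ℤ)
  set F := Matrix.single j k (1 : ℤ)
  set G := Matrix.single i k (1 : ℤ)
  have expand : (1 + F) * (1 + E) * (1 + -F) * (1 + -E) = 1 + -G := by
    have h1 : (1 + F) * (1 + E) = 1 + E + F := by
      rw [mul_add, add_mul, add_mul, one_mul, mul_one, one_mul, hFE]
      abel
    have h2 : (1 + -F) * (1 + -E) = 1 + -E + -F := by
      rw [mul_add, add_mul, add_mul, one_mul, mul_one, one_mul, neg_mul_neg, hFE]
      abel
    rw [mul_assoc ((1 + F) * (1 + E)), h1, h2]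
    simp only [mul_add, add_mul, mul_neg, mul_one, one_mul, hEE, hFF, hEF, hFE, neg_zero]
    abel
  exact expand



lemma stdRep_inj {n : ℕ} (hn : 1 ≤ n) {σ τ : Equiv.Perm (Fin (n + 1))}
    (h : stdRepMatrix n σ = stdRepMatrix n τ) : σ = τ := by
  have hE : ∀ i j : Fin n,
      ((if σ j.castSucc = i.castSucc then (1 : ℤ) else 0) -
        (if σ (Fin.last n) = i.castSucc then 1 else 0)) =
      ((if τ j.castSucc = i.castSucc then (1 : ℤ) else 0) -
        (if τ (Fin.last n) = i.castSucc then 1 else 0)) := by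
    intro i j
    have h2 := congrFun (congrFun h i) j
    simpa [stdRepMatrix] using h2
  have j0 : Fin n := ⟨0, by omega⟩
  have hcast_ne_last : ∀ i : Fin n, (Fin.castSucc i : Fin (n + 1)) ≠ Fin.last n :=
    fun i => (Fin.castSucc_lt_last i).ne
  have hlast : σ (Fin.last n) = τ (Fin.last n) := by
    by_contra hne
    by_cases hs : σ (Fin.last n) = Fin.last n
    · by_cases ht : τ (Fin.last n) = Fin.last n
      · exact hne (hs.trans ht.symm)
      · obtain ⟨t, htt⟩ := Fin.exists_castSucc_eq.mpr ht
        have hforall : ∀ j : Fin n, τ j.castSucc = Fin.castSucc t := by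
          intro j
          have hE' := hE t j
          have eσ : (if σ (Fin.last n) = Fin.castSucc t then (1 : ℤ) else 0) = 0 := by
            simp only [hs]
            exact if_neg fun e => hcast_ne_last t e.symm
          have eτ : (if τ (Fin.last n) = Fin.castSucc t then (1 : ℤ) else 0) = 1 := by
            simp [← htt]
          rw [eσ, eτ] at hE'
          by_cases h1 : σ j.castSucc = t.castSucc <;> by_cases h2 : τ j.castSucc = t.castSucc <;>
            simp [h1, h2] at hE' ⊢
        have h3 := τ.injective ((hforall j0).trans htt)
        exact hcast_ne_last j0 h3
    · obtain ⟨s, hss⟩ := Fin.exists_castSucc_eq.mpr hs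
      have hτ : τ (Fin.last n) ≠ Fin.castSucc s := fun e => hne (by rw [e]; exact hss.symm)
      have hforall : ∀ j : Fin n, σ j.castSucc = Fin.castSucc s := by
        intro j
        have hE' := hE s j
        have eσ : (if σ (Fin.last n) = Fin.castSucc s then (1 : ℤ) else 0) = 1 := by
          simp [← hss]
        rw [eσ, if_neg hτ] at hE'
        by_cases h1 : σ j.castSucc = s.castSucc <;> by_cases h2 : τ j.castSucc = s.castSucc <;>
          simp [h1, h2] at hE' ⊢
      have h3 := σ.injective ((hforall j0).trans hss)
      exact hcast_ne_last j0 h3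
  have happ : ∀ j : Fin n, σ j.castSucc = τ j.castSucc := by
    intro j
    by_contra hne
    by_cases h1 : σ j.castSucc = Fin.last n
    · have h2 : τ j.castSucc ≠ Fin.last n := fun e => hne (h1.trans e.symm)
      obtain ⟨i, hi⟩ := Fin.exists_castSucc_eq.mpr h2
      have hE' := hE i j
      rw [hlast] at hE'
      have hσ : σ j.castSucc ≠ i.castSucc := by
        rw [h1]; exact fun e => (hcast_ne_last i) e.symm
      rw [if_neg hσ, if_pos hi.symm] at hE'
      have h4 : (0 : ℤ) = 1 := by linarith
      norm_num at h4
    · obtain ⟨i, hi⟩ := Fin.exists_castSucc_eq.mpr h1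
      have hτ : τ j.castSucc ≠ i.castSucc := fun e => hne (hi.symm.trans e.symm)
      have hE' := hE i j
      rw [hlast] at hE'
      rw [if_pos hi.symm, if_neg hτ] at hE'
      have h4 : (0 : ℤ) = 1 := by linarith
      norm_num at h4
  apply Equiv.ext
  intro x
  by_cases hx : x = Fin.last n
  · rw [hx]; exact hlast
  · obtain ⟨i, hi⟩ := Fin.exists_castSucc_eq.mpr hx
    rw [← hi]; exact happ i


lemma stdRepMatrix_ext1 {n : ℕ} (π : Equiv.Perm (Fin n)) :
    stdRepMatrix n (ext1 π) = (π⁻¹).permMatrix ℤ := by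
  rw [stdRepMatrix]
  exact stdRep_ext1 π

lemma tsl_mem_of_normal {n : ℕ} (hn : 3 ≤ n)
    (N : Subgroup (Matrix.SpecialLinearGroup (Fin n) ℤ)) (hN : N.Normal)
    (hperm : ∀ (π : Equiv.Perm (Fin n)) (hπ : Equiv.Perm.sign π = 1), permSL π hπ ∈ N)
    {i k : Fin n} (hik : i ≠ k) (c : ℤ) : tsl hik c ∈ N := by
  obtain ⟨j, hji, hjk⟩ : ∃ j : Fin n, j ≠ i ∧ j ≠ k := by
    have hcard : ({i, k} : Finset (Fin n)).card ≤ 2 := by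
      apply le_trans (Finset.card_insert_le i {k})
      simp
    have hcompl : (({i, k} : Finset (Fin n))ᶜ).Nonempty := by
      rw [← Finset.card_pos, Finset.card_compl, Fintype.card_fin]
      omega
    obtain ⟨j, hj⟩ := hcompl
    rw [Finset.mem_compl] at hj
    simp only [Finset.mem_insert, Finset.mem_singleton] at hj
    push_neg at hj
    exact ⟨j, hj.1, hj.2⟩
  have hij : i ≠ j := Ne.symm hji
  -- the 3-cycle i ↦ j ↦ k ↦ i
  set π : Equiv.Perm (Fin n) := Equiv.swap i j * Equiv.swap j k with hπdef
  have hπi : π i = j := by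
    rw [hπdef, Equiv.Perm.mul_apply, Equiv.swap_apply_of_ne_of_ne hij hik,
      Equiv.swap_apply_left]
  have hπj : π j = k := by
    rw [hπdef, Equiv.Perm.mul_apply, Equiv.swap_apply_left,
      Equiv.swap_apply_of_ne_of_ne (Ne.symm hik) (Ne.symm hjk)]
  have hsign : Equiv.Perm.sign π = 1 := by
    rw [hπdef, _root_.map_mul, Equiv.Perm.sign_swap hij, Equiv.Perm.sign_swap hjk]
    norm_num
  have hp : permSL π hsign ∈ N := hperm π hsign
  -- step 1 : tsl hij 1 * tsl hjk (-1) ∈ N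
  have hconj : permSL π hsign * tsl hij (-1) * (permSL π hsign)⁻¹ = tsl hjk (-1) := by
    have h1 := permSL_mul_tsl π hsign hij (-1)
    have h2 : tsl (show π i ≠ π j from fun e => hij (π.injective e)) (-1) = tsl hjk (-1) := by
      apply Subtype.ext
      show Matrix.transvection (π i) (π j) (-1) = Matrix.transvection j k (-1)
      rw [hπi, hπj]
    rw [h1, h2, mul_inv_cancel_right]
  have hx : tsl hij 1 * tsl hjk (-1) ∈ N := by
    have hmem : tsl hij 1 * permSL π hsign * (tsl hij 1)⁻¹ * (permSL π hsign)⁻¹ ∈ N :=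
      N.mul_mem (hN.conj_mem _ hp _) (N.inv_mem hp)
    have heq : tsl hij 1 * permSL π hsign * (tsl hij 1)⁻¹ * (permSL π hsign)⁻¹
        = tsl hij 1 * tsl hjk (-1) := by
      rw [tsl_inv]
      have h3 : tsl hij 1 * permSL π hsign * tsl hij (-1) * (permSL π hsign)⁻¹
          = tsl hij 1 * (permSL π hsign * tsl hij (-1) * (permSL π hsign)⁻¹) := by
        group
      rw [h3, hconj]
    rw [heq] at hmem
    exact hmem
  -- step 2 : commutator gives tsl hik (-1) ∈ N
  have hm1 : tsl hik (-1) ∈ N := by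
    have hy : tsl hjk 1 * (tsl hij 1 * tsl hjk (-1)) * (tsl hjk 1)⁻¹ *
        (tsl hij 1 * tsl hjk (-1))⁻¹ ∈ N :=
      N.mul_mem (hN.conj_mem _ hx _) (N.inv_mem hx)
    have heq2 : tsl hjk 1 * (tsl hij 1 * tsl hjk (-1)) * (tsl hjk 1)⁻¹ *
        (tsl hij 1 * tsl hjk (-1))⁻¹ = tsl hik (-1) := by
      have hrw : tsl hjk (-1) = (tsl hjk 1)⁻¹ := by rw [tsl_inv]
      rw [hrw]
      have hgrp : tsl hjk 1 * (tsl hij 1 * (tsl hjk 1)⁻¹) * (tsl hjk 1)⁻¹ *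
          (tsl hij 1 * (tsl hjk 1)⁻¹)⁻¹
          = tsl hjk 1 * tsl hij 1 * (tsl hjk 1)⁻¹ * (tsl hij 1)⁻¹ := by
        group
      rw [hgrp, tsl_inv, tsl_inv]
      apply Subtype.ext
      simp only [Matrix.SpecialLinearGroup.coe_mul]
      exact transvection_comm hij hjk hik
    rw [heq2] at hy
    exact hy
  -- step 3 : powers
  have hone : tsl hik 1 ∈ N := by
    have h5 := N.inv_mem hm1
    rwa [tsl_inv, neg_neg] at h5
  have hnat : ∀ m : ℕ, tsl hik (m : ℤ) ∈ N := by
    intro m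
    induction m with
    | zero =>
      rw [Nat.cast_zero, tsl_zero]
      exact N.one_mem
    | succ m ihm =>
      rw [Nat.cast_succ, ← tsl_mul]
      exact N.mul_mem ihm hone
  rcases Int.natAbs_eq c with hc | hc
  · rw [hc]; exact hnat _
  · rw [hc, ← tsl_inv]
    exact N.inv_mem (hnat _)

end Stmt16Aux

theorem stmt16 (n : ℕ) (hn : 3 ≤ n) :
    (∀ σ τ : Equiv.Perm (Fin (n + 1)), σ ∈ alternatingGroup (Fin (n + 1)) →
      τ ∈ alternatingGroup (Fin (n + 1)) → stdRepMatrix n σ = stdRepMatrix n τ → σ = τ) ∧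
    Subgroup.normalClosure
      {g : Matrix.SpecialLinearGroup (Fin n) ℤ | ∃ σ ∈ alternatingGroup (Fin (n + 1)),
        (g : Matrix (Fin n) (Fin n) ℤ) = stdRepMatrix n σ} = ⊤ := by
  constructor
  · intro σ τ _ _ h
    exact Stmt16Aux.stdRep_inj (by omega) h
  · apply Stmt16Aux.subgroup_eq_top
    intro i j hij c
    apply Stmt16Aux.tsl_mem_of_normal hn _ Subgroup.normalClosure_normal _ hij c
    intro π hπ
    apply Subgroup.subset_normalClosure
    refine ⟨Stmt16Aux.ext1 π, ?_, ?_⟩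
    · rw [Equiv.Perm.mem_alternatingGroup, Stmt16Aux.sign_ext1]
      exact hπ
    · exact (Stmt16Aux.stdRepMatrix_ext1 π).symm
end
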